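/- Let X be a finite nonempty set with |X| = n, let N ≥ 3, and let p_d be a chain-structured joint distribution on X^N given by p_d(y1, …, yN) = π(y1) * Π_{k=1}^{N−1} P_k(y_k, y_{k+1}), where π is a probability mass function on X and each P_k is a row-stochastic n×n matrix indexed by X. Let S = {1,…,N} × X × {1,…,N} × X, define the training distribution p on S by p(i, y, j, y') = (1/(2(N−1))) * p_d(Y_i = y, Y_j = y') if |i − j| = 1 and p(i, y, j, y') = 0 otherwise, let u be the uniform distribution on S, and let q*(s) = (p(s) + u(s))/2 be the minimizer of the risk R(q) = −Σ_{s∈S} p(s) log q(s) − Σ_{s∈S} u(s) log q(s). Then for every i ∈ {1,…,N−1} and every y ∈ X with p_d(Y_i = y) > 0, there exists λ ∈ (0,1) such that for all y' ∈ X, the conditional q*(v2 = y' | i1 = i, v1 = y, i2 = i+1) := q*(i, y, i+1, y') / Σ_{y''∈X} q*(i, y, i+1, y'') equals λ * p_d(Y_{i+1} = y' | Y_i = y) + (1 − λ)/n. -/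

import Mathlib

private lemma mixture_identity (c m1 m2 K nn : ℝ) (hm1 : m1 ≠ 0) (hK : K ≠ 0)
    (hn : nn ≠ 0) (hD : c * m1 + nn / K ≠ 0) :
    ((c * m2 + 1 / K) / 2) / ((c * m1 + nn / K) / 2) =
      (c * m1 / (c * m1 + nn / K)) * (m2 / m1) +
        (1 - c * m1 / (c * m1 + nn / K)) / nn := by
  have hD' : c * m1 * K + nn ≠ 0 := by
    intro h
    apply hD
    field_simp
    linear_combination h
  have hD'' : c * K * m1 + nn ≠ 0 := by rwa [mul_right_comm] at hD'
  field_simp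
  ring

/-- Part (i) of Theorem 2 (Theorem A.2) of the paper: for adjacent variable pairs of
the chain, the risk minimizer's learned conditional is a strict mixture of the true
conditional probability and the uniform distribution.

Variables of the chain are indexed by `Fin N` (0-based, so the paper's variables
`Y_1, …, Y_N` correspond to indices `0, …, N-1`). `pd` is the chain-structured joint
distribution, `marg1 i a = p_d(Y_i = a)`, `marg2 i j a b = p_d(Y_i = a, Y_j = b)`,
`p` is the training distribution on sequences `(i1, v1, i2, v2)` supported on adjacent
index pairs, `u` is the uniform distribution on such sequences, and
`qstar = (p + u)/2` is the minimizer of the risk `R(q) = H(p,q) + H(u,q)`. -/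
theorem risk_minimizer_adjacent_conditional_is_mixture
    {X : Type*} [Fintype X] [DecidableEq X] [Nonempty X]
    (n : ℕ) (hn : Fintype.card X = n)
    (N : ℕ) (hN : 3 ≤ N)
    (pi0 : X → ℝ) (hpi0_nonneg : ∀ x, 0 ≤ pi0 x) (hpi0_sum : ∑ x, pi0 x = 1)
    (P : ℕ → X → X → ℝ)
    (hP_nonneg : ∀ k x y, 0 ≤ P k x y)
    (hP_row : ∀ k x, ∑ y, P k x y = 1)
    (pd : (Fin N → X) → ℝ)
    (hpd : ∀ y : Fin N → X,
      pd y = pi0 (y ⟨0, by omega⟩) *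
        ∏ k : Fin (N - 1),
          P (k : ℕ) (y ⟨(k : ℕ), by have := k.isLt; omega⟩)
            (y ⟨(k : ℕ) + 1, by have := k.isLt; omega⟩))
    (marg1 : Fin N → X → ℝ)
    (hmarg1 : ∀ (i : Fin N) (a : X),
      marg1 i a = ∑ y : Fin N → X, if y i = a then pd y else 0)
    (marg2 : Fin N → Fin N → X → X → ℝ)
    (hmarg2 : ∀ (i j : Fin N) (a b : X),
      marg2 i j a b = ∑ y : Fin N → X, if y i = a ∧ y j = b then pd y else 0)
    (p : Fin N × X × Fin N × X → ℝ)
    (hp : ∀ (i : Fin N) (a : X) (j : Fin N) (b : X),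
      p (i, a, j, b) =
        if (i : ℕ) + 1 = (j : ℕ) ∨ (j : ℕ) + 1 = (i : ℕ) then
          (1 / (2 * ((N : ℝ) - 1))) * marg2 i j a b
        else 0)
    (u : Fin N × X × Fin N × X → ℝ)
    (hu : ∀ s, u s = 1 / (Fintype.card (Fin N × X × Fin N × X) : ℝ))
    (qstar : Fin N × X × Fin N × X → ℝ)
    (hqstar : ∀ s, qstar s = (p s + u s) / 2) :
    ∀ (i : Fin N) (hi : (i : ℕ) + 1 < N) (a : X), 0 < marg1 i a →
      ∃ lam : ℝ, lam ∈ Set.Ioo (0 : ℝ) 1 ∧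
        ∀ b : X,
          qstar (i, a, ⟨(i : ℕ) + 1, hi⟩, b) /
              (∑ b' : X, qstar (i, a, ⟨(i : ℕ) + 1, hi⟩, b')) =
            lam * (marg2 i ⟨(i : ℕ) + 1, hi⟩ a b / marg1 i a) + (1 - lam) / (n : ℝ) := by
  intro i hi a hma
  set j : Fin N := ⟨(i : ℕ) + 1, hi⟩ with hj
  have hnpos : 0 < n := hn ▸ Fintype.card_pos
  have hnr : (0:ℝ) < (n : ℝ) := by exact_mod_cast hnpos
  have hNr : (3:ℝ) ≤ (N : ℝ) := by exact_mod_cast hN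
  have hcpos : (0:ℝ) < 1 / (2 * ((N : ℝ) - 1)) := by
    apply div_pos one_pos; linarith
  set c : ℝ := 1 / (2 * ((N : ℝ) - 1)) with hc
  haveI : NeZero N := ⟨by omega⟩
  have hKpos : (0:ℝ) < (Fintype.card (Fin N × X × Fin N × X) : ℝ) := by
    exact_mod_cast Fintype.card_pos
  set K : ℝ := (Fintype.card (Fin N × X × Fin N × X) : ℝ) with hK
  have hsum2 : ∑ b, marg2 i j a b = marg1 i a := by
    rw [hmarg1]
    simp only [hmarg2]
    rw [Finset.sum_comm]
    refine Finset.sum_congr rfl fun y _ => ?_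
    by_cases hya : y i = a
    · simp [hya]
    · simp [hya]
  have hpq : ∀ b, p (i, a, j, b) = c * marg2 i j a b := by
    intro b
    rw [hp]
    have : (i : ℕ) + 1 = (j : ℕ) := rfl
    rw [if_pos (Or.inl this)]
  have hqb : ∀ b, qstar (i, a, j, b) = (c * marg2 i j a b + 1 / K) / 2 := by
    intro b
    rw [hqstar, hpq, hu]
  have hsumq : ∑ b' : X, qstar (i, a, j, b') = (c * marg1 i a + (n : ℝ) / K) / 2 := by
    simp only [hqb]
    rw [← Finset.sum_div, Finset.sum_add_distrib, ← Finset.mul_sum, hsum2,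
      Finset.sum_const, Finset.card_univ, hn, nsmul_eq_mul]
    ring_nf
  have h1 : 0 < c * marg1 i a := mul_pos hcpos hma
  have h2 : 0 < (n : ℝ) / K := div_pos hnr hKpos
  have hDpos : 0 < c * marg1 i a + (n : ℝ) / K := by linarith
  refine ⟨c * marg1 i a / (c * marg1 i a + (n : ℝ) / K),
    ⟨div_pos h1 hDpos, ?_⟩, ?_⟩
  · rw [div_lt_one hDpos]; linarith
  · intro b
    rw [hqb, hsumq]
    exact mixture_identity c (marg1 i a) (marg2 i j a b) K (n : ℝ)
      (ne_of_gt hma) (ne_of_gt hKpos) (ne_of_gt hnr) (ne_of_gt hDpos)
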